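/- Let X ~ N(μ, 1) and let z > 0. If 0 < μ ≤ z then P(|X − μ| < z ∣ |X| > z) < P(|X − μ| < z) = 2Φ(z) − 1. Consequently, for b ~ N(β, se²) with se > 0 and signal-to-noise ratio |β|/se at most z = z_{1−α/2}, the conditional coverage P(|b − β|/se < z ∣ |b|/se > z) is strictly less than the nominal coverage 1 − α. -/

import Mathlib

open MeasureTheory ProbabilityTheory
open scoped NNReal

/-- The standard normal cumulative distribution function Φ. -/
noncomputable def Phi (x : ℝ) : ℝ :=
  ∫ t in Set.Iic x, (Real.sqrt (2 * Real.pi))⁻¹ * Real.exp (-t ^ 2 / 2)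

/-- The Gaussian distribution with mean `m` and standard deviation `s`. -/
noncomputable def gauss (m s : ℝ) : Measure ℝ := gaussianReal m (Real.toNNReal (s ^ 2))

namespace CCLN

open Set

lemma pdf_eq (x : ℝ) :
    gaussianPDFReal 0 1 x = (Real.sqrt (2 * Real.pi))⁻¹ * Real.exp (-x ^ 2 / 2) := by
  simp [gaussianPDFReal]

lemma pdf_int (μ : ℝ) : Integrable (gaussianPDFReal μ 1) := integrable_gaussianPDFReal μ 1

lemma Phi_eq_integral (a : ℝ) : Phi a = ∫ x in Iic a, gaussianPDFReal 0 1 x := by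
  unfold Phi; simp only [pdf_eq]

lemma toReal_eq (μ : ℝ) (s : Set ℝ) :
    ((gaussianReal μ 1) s).toReal = ∫ x in s, gaussianPDFReal μ 1 x := by
  rw [gaussianReal_apply_eq_integral μ one_ne_zero s,
    ENNReal.toReal_ofReal (integral_nonneg fun x => gaussianPDFReal_nonneg _ _ _)]

lemma shift (μ : ℝ) (s : Set ℝ) (hs : MeasurableSet s) :
    (gaussianReal μ 1) s = (gaussianReal 0 1) ((· + μ) ⁻¹' s) := by
  have h := gaussianReal_map_add_const (μ := 0) (v := 1) μ
  rw [zero_add] at h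
  rw [← h, Measure.map_apply (measurable_add_const μ) hs]

lemma int_Iic (μ a : ℝ) : ∫ x in Iic a, gaussianPDFReal μ 1 x = Phi (a - μ) := by
  rw [← toReal_eq, shift μ _ measurableSet_Iic]
  have : (· + μ) ⁻¹' Iic a = Iic (a - μ) := by ext x; simp [le_sub_iff_add_le]
  rw [this, toReal_eq, ← Phi_eq_integral]

lemma Phi_lt {a b : ℝ} (h : a < b) : Phi a < Phi b := by
  have hd : Phi b - Phi a = ∫ x in a..b, gaussianPDFReal 0 1 x := by
    rw [Phi_eq_integral, Phi_eq_integral,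
      intervalIntegral.integral_Iic_sub_Iic (pdf_int 0).integrableOn (pdf_int 0).integrableOn]
  have hpos : 0 < ∫ x in a..b, gaussianPDFReal 0 1 x :=
    intervalIntegral.intervalIntegral_pos_of_pos ((pdf_int 0).intervalIntegrable)
      (fun x => gaussianPDFReal_pos _ _ _ one_ne_zero) h
  linarith

lemma Phi_mono {a b : ℝ} (h : a ≤ b) : Phi a ≤ Phi b := by
  rcases eq_or_lt_of_le h with rfl | h
  · exact le_rfl
  · exact (Phi_lt h).le

lemma int_Ioi (μ a : ℝ) : ∫ x in Ioi a, gaussianPDFReal μ 1 x = 1 - Phi (a - μ) := by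
  have := intervalIntegral.integral_Iic_add_Ioi (b := a) (pdf_int μ).integrableOn (pdf_int μ).integrableOn
  rw [integral_gaussianPDFReal_eq_one μ one_ne_zero, int_Iic] at this
  linarith

lemma int_Iio (μ a : ℝ) : ∫ x in Iio a, gaussianPDFReal μ 1 x = Phi (a - μ) := by
  rw [← integral_Iic_eq_integral_Iio, int_Iic]

lemma Phi_pos (a : ℝ) : 0 < Phi a := by
  have : Phi a = ((gaussianReal 0 1) (Iic a)).toReal := by
    rw [toReal_eq, ← Phi_eq_integral]
  rw [this]
  refine ENNReal.toReal_pos (fun h0 => ?_) (measure_ne_top _ _)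
  have := gaussianReal_absolutelyContinuous' 0 one_ne_zero h0
  simp [Real.volume_Iic] at this

lemma Phi_neg (a : ℝ) : Phi (-a) = 1 - Phi a := by
  rw [Phi_eq_integral]
  rw [show (∫ x in Iic (-a), gaussianPDFReal 0 1 x)
      = ∫ x in Iic (-a), gaussianPDFReal 0 1 (-x) from by
    simp only [show ∀ x : ℝ, gaussianPDFReal 0 1 (-x) = gaussianPDFReal 0 1 x from
      fun x => by simp [gaussianPDFReal]]]
  rw [integral_comp_neg_Iic, neg_neg, int_Ioi, sub_zero]

lemma Phi_zero : Phi 0 = 1 / 2 := by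
  have := Phi_neg 0
  rw [neg_zero] at this
  linarith

lemma Phi_lt_one (a : ℝ) : Phi a < 1 := by
  have := Phi_pos (-a)
  rw [Phi_neg] at this
  linarith

lemma mB (μ z : ℝ) (hz : 0 < z) :
    ((gaussianReal μ 1) {x : ℝ | |x - μ| < z}).toReal = 2 * Phi z - 1 := by
  have hset : {x : ℝ | |x - μ| < z} = Ioo (μ - z) (μ + z) := by
    ext x; simp only [mem_setOf_eq, abs_lt, mem_Ioo]
    constructor <;> rintro ⟨h1, h2⟩ <;> constructor <;> linarith
  rw [hset, toReal_eq, ← integral_Ioc_eq_integral_Ioo,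
    ← intervalIntegral.integral_of_le (by linarith),
    ← intervalIntegral.integral_Iic_sub_Iic (pdf_int μ).integrableOn (pdf_int μ).integrableOn,
    int_Iic, int_Iic]
  have h2 : μ - z - μ = -z := by ring
  have h3 : μ + z - μ = z := by ring
  rw [h2, h3, Phi_neg]
  ring

lemma measSet1 (c z : ℝ) : MeasurableSet {x : ℝ | |x - c| < z ∧ z < |x|} := by
  refine MeasurableSet.inter ?_ ?_
  · exact measurableSet_lt ((measurable_id.sub_const _).abs) measurable_const
  · exact measurableSet_lt measurable_const measurable_id.abs

lemma measSet2 (z : ℝ) : MeasurableSet {x : ℝ | z < |x|} :=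
  measurableSet_lt measurable_const measurable_id.abs

lemma main (μ z : ℝ) (hz : 0 < z) (hμ : 0 < μ) (hμz : μ ≤ z) :
    ((gaussianReal μ 1) {x : ℝ | |x - μ| < z ∧ z < |x|}).toReal
      / ((gaussianReal μ 1) {x : ℝ | z < |x|}).toReal < 2 * Phi z - 1 := by
  have hBA : {x : ℝ | |x - μ| < z ∧ z < |x|} = Ioo z (μ + z) := by
    ext x
    simp only [mem_setOf_eq, abs_lt, lt_abs, mem_Ioo]
    constructor
    · rintro ⟨⟨h1, h2⟩, h3 | h3⟩ <;> constructor <;> linarith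
    · rintro ⟨h1, h2⟩
      exact ⟨⟨by linarith, by linarith⟩, Or.inl h1⟩
  have hA : {x : ℝ | z < |x|} = Iio (-z) ∪ Ioi z := by
    ext x
    simp only [mem_setOf_eq, lt_abs, mem_union, mem_Iio, mem_Ioi]
    constructor
    · rintro (h | h)
      · right; exact h
      · left; linarith
    · rintro (h | h)
      · right; linarith
      · left; exact h
  have hnum : ((gaussianReal μ 1) {x : ℝ | |x - μ| < z ∧ z < |x|}).toReal
      = Phi z - Phi (z - μ) := by
    rw [hBA, toReal_eq, ← integral_Ioc_eq_integral_Ioo,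
      ← intervalIntegral.integral_of_le (by linarith),
      ← intervalIntegral.integral_Iic_sub_Iic (pdf_int μ).integrableOn (pdf_int μ).integrableOn,
      int_Iic, int_Iic]
    have h3 : μ + z - μ = z := by ring
    rw [h3]
  have hden : ((gaussianReal μ 1) {x : ℝ | z < |x|}).toReal
      = Phi (-z - μ) + (1 - Phi (z - μ)) := by
    rw [hA, toReal_eq,
      setIntegral_union ((Iio_disjoint_Ici (show -z ≤ z by linarith)).mono le_rfl Ioi_subset_Ici_self) measurableSet_Ioi
        (pdf_int μ).integrableOn (pdf_int μ).integrableOn,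
      int_Iio, int_Ioi]
  rw [hnum, hden]
  set a := Phi z with ha
  set u := Phi (z - μ) with hu
  set v := Phi (-z - μ) with hv
  have ha1 : 1 / 2 < a := by rw [ha, ← Phi_zero]; exact Phi_lt hz
  have ha2 : a < 1 := Phi_lt_one z
  have hu1 : 1 / 2 ≤ u := by rw [hu, ← Phi_zero]; exact Phi_mono (by linarith)
  have hu2 : u < a := Phi_lt (by linarith)
  have hv1 : 0 < v := Phi_pos _
  have hD : 0 < v + (1 - u) := by linarith
  rw [div_lt_iff₀ hD]
  nlinarith [mul_pos (by linarith : (0:ℝ) < 2 * a - 1) hv1,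
    mul_nonneg (by linarith : (0:ℝ) ≤ 1 - a) (by linarith : (0:ℝ) ≤ 2 * u - 1)]

lemma neg_sym (μ : ℝ) (s : Set ℝ) (hs : MeasurableSet s) :
    (gaussianReal μ 1) ((fun x => -x) ⁻¹' s) = (gaussianReal (-μ) 1) s := by
  have h := gaussianReal_map_const_mul (μ := μ) (v := 1) (-1)
  have hvar : (NNReal.mk ((-1 : ℝ) ^ 2) (sq_nonneg _) * 1 : ℝ≥0) = 1 := by
    apply NNReal.coe_injective
    norm_num
  rw [hvar] at h
  have hμ' : (-1 : ℝ) * μ = -μ := by ring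
  rw [hμ'] at h
  rw [← h, Measure.map_apply (measurable_const_mul _) hs]
  congr 1
  ext x
  simp

end CCLN

/-- For `X ~ N(μ, 1)`, `z > 0` and `0 < μ ≤ z`:
`P(|X − μ| < z ∣ |X| > z) < P(|X − μ| < z) = 2Φ(z) − 1`.  Consequently, for
`b ~ N(β, se²)` with `se > 0` and signal-to-noise ratio `0 < |β|/se ≤ z` where
`z = z_{1−α/2}` (i.e. `Φ(z) = 1 − α/2`), the conditional coverage
`P(|b − β|/se < z ∣ |b|/se > z)` is strictly less than `1 − α`.
Here `P(B ∣ A) = P(B ∩ A)/P(A)`. -/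
theorem conditional_coverage_lt_nominal :
    (∀ μ z : ℝ, 0 < z → 0 < μ → μ ≤ z →
      ((gaussianReal μ 1) {x : ℝ | |x - μ| < z ∧ z < |x|}).toReal
          / ((gaussianReal μ 1) {x : ℝ | z < |x|}).toReal
        < ((gaussianReal μ 1) {x : ℝ | |x - μ| < z}).toReal ∧
      ((gaussianReal μ 1) {x : ℝ | |x - μ| < z}).toReal = 2 * Phi z - 1) ∧
    (∀ α z β se : ℝ, 0 < α → α < 1 → Phi z = 1 - α / 2 → 0 < se → β ≠ 0 →
      |β| / se ≤ z →
      ((gauss β se) {x : ℝ | |x - β| / se < z ∧ z < |x| / se}).toReal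
          / ((gauss β se) {x : ℝ | z < |x| / se}).toReal < 1 - α) := by
  constructor
  · intro μ z hz hμ hμz
    refine ⟨?_, CCLN.mB μ z hz⟩
    rw [CCLN.mB μ z hz]
    exact CCLN.main μ z hz hμ hμz
  · intro α z β se hα hα1 hΦ hse hβ hβz
    -- z is positive
    have hz : 0 < z := by
      by_contra h
      push_neg at h
      have := CCLN.Phi_mono h
      rw [hΦ, CCLN.Phi_zero] at this
      linarith
    -- scale: gauss β se pushed forward by (se⁻¹ * ·)
    set μ₀ : ℝ := se⁻¹ * β with hμ₀
    have hvar : (NNReal.mk ((se⁻¹ : ℝ) ^ 2) (sq_nonneg _) * (Real.toNNReal (se ^ 2)) : ℝ≥0) = 1 := by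
      apply NNReal.coe_injective
      push_cast
      rw [Real.coe_toNNReal _ (sq_nonneg se)]
      field_simp
    have hmap := gaussianReal_map_const_mul (μ := β) (v := Real.toNNReal (se ^ 2)) se⁻¹
    rw [hvar] at hmap
    have habs1 : ∀ x : ℝ, |se⁻¹ * x - μ₀| = |x - β| / se := by
      intro x
      rw [hμ₀, ← mul_sub, abs_mul, abs_of_pos (inv_pos.mpr hse), div_eq_mul_inv, mul_comm]
    have habs2 : ∀ x : ℝ, |se⁻¹ * x| = |x| / se := by
      intro x
      rw [abs_mul, abs_of_pos (inv_pos.mpr hse), div_eq_mul_inv, mul_comm]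
    have hpre1 : (fun x => se⁻¹ * x) ⁻¹' {y : ℝ | |y - μ₀| < z ∧ z < |y|}
        = {x : ℝ | |x - β| / se < z ∧ z < |x| / se} := by
      ext x
      simp only [Set.mem_preimage, Set.mem_setOf_eq, habs1, habs2]
    have hpre2 : (fun x => se⁻¹ * x) ⁻¹' {y : ℝ | z < |y|} = {x : ℝ | z < |x| / se} := by
      ext x
      simp only [Set.mem_preimage, Set.mem_setOf_eq, habs2]
    have hg1 : (gauss β se) {x : ℝ | |x - β| / se < z ∧ z < |x| / se}
        = (gaussianReal μ₀ 1) {y : ℝ | |y - μ₀| < z ∧ z < |y|} := by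
      rw [← hmap, Measure.map_apply (measurable_const_mul _) (CCLN.measSet1 μ₀ z), hpre1]
      rfl
    have hg2 : (gauss β se) {x : ℝ | z < |x| / se}
        = (gaussianReal μ₀ 1) {y : ℝ | z < |y|} := by
      rw [← hmap, Measure.map_apply (measurable_const_mul _) (CCLN.measSet2 z), hpre2]
      rfl
    have hβz' : |μ₀| ≤ z := by
      rw [hμ₀, abs_mul, abs_of_pos (inv_pos.mpr hse)]
      calc se⁻¹ * |β| = |β| / se := by rw [div_eq_mul_inv, mul_comm]
      _ ≤ z := hβz
    have hμ₀ne : μ₀ ≠ 0 := mul_ne_zero (inv_ne_zero hse.ne') hβ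
    rw [hg1, hg2]
    have key : ((gaussianReal μ₀ 1) {y : ℝ | |y - μ₀| < z ∧ z < |y|}).toReal
        / ((gaussianReal μ₀ 1) {y : ℝ | z < |y|}).toReal < 2 * Phi z - 1 := by
      rcases lt_or_gt_of_ne hμ₀ne with hneg | hpos
      · -- μ₀ < 0 : use symmetry
        have h1 : (gaussianReal μ₀ 1) {y : ℝ | |y - μ₀| < z ∧ z < |y|}
            = (gaussianReal (-μ₀) 1) {y : ℝ | |y - (-μ₀)| < z ∧ z < |y|} := by
          rw [← CCLN.neg_sym μ₀ _ (CCLN.measSet1 (-μ₀) z)]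
          congr 1
          ext x
          simp only [Set.mem_preimage, Set.mem_setOf_eq, abs_neg]
          rw [show -x - -μ₀ = -(x - μ₀) from by ring, abs_neg]
        have h2' : (gaussianReal μ₀ 1) {y : ℝ | z < |y|}
            = (gaussianReal (-μ₀) 1) {y : ℝ | z < |y|} := by
          rw [← CCLN.neg_sym μ₀ _ (CCLN.measSet2 z)]
          congr 1
          ext x
          simp [abs_neg]
        rw [h1, h2']
        refine CCLN.main (-μ₀) z hz (by linarith) ?_
        calc -μ₀ ≤ |μ₀| := neg_le_abs μ₀
        _ ≤ z := hβz'
      · exact CCLN.main μ₀ z hz hpos (le_trans (le_abs_self μ₀) hβz')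
    have : 2 * Phi z - 1 = 1 - α := by rw [hΦ]; ring
    rwa [this] at key
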